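/- The only rational points on the elliptic curve E₁: y² = x³ + 3x² - 8x - 24 are (-3, 0) and the point at infinity. -/

import Mathlib

/-- extract a square from a nonneg coprime factor -/
lemma sq_of_coprime_nonneg {a b c : ℤ} (h : IsCoprime a b) (heq : a * b = c ^ 2)
    (ha : 0 ≤ a) : ∃ r : ℤ, a = r ^ 2 := by
  obtain ⟨r, hr | hr⟩ := Int.sq_of_isCoprime h heq
  · exact ⟨r, hr⟩
  · refine ⟨0, ?_⟩
    have h2 : r ^ 2 ≤ 0 := by linarith
    have h3 : r = 0 := by nlinarith
    rw [hr, h3]; ring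

lemma natAbs_lt_of_sq_lt_sq {t c : ℤ} (h : t ^ 2 < c ^ 2) : t.natAbs < c.natAbs := by
  have h1 : (t.natAbs : ℤ) ^ 2 < (c.natAbs : ℤ) ^ 2 := by
    rw [Int.natCast_natAbs, Int.natCast_natAbs, sq_abs, sq_abs]; exact h
  have h2 : (t.natAbs : ℤ) < (c.natAbs : ℤ) := by
    nlinarith [Int.ofNat_nonneg t.natAbs, Int.ofNat_nonneg c.natAbs]
  exact_mod_cast h2


lemma int_one_le_sq {x : ℤ} (h : x ≠ 0) : 1 ≤ x ^ 2 := by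
  have h1 : 1 ≤ |x| := Int.one_le_abs h
  nlinarith [sq_abs x]

lemma abs_lt_helper {M1 M N c : ℤ} (h : M ^ 2 = M1 ^ 4) (hM1 : M1 ≠ 0) (hN : N ≠ 0)
    (habs : (c.natAbs : ℤ) = M ^ 2 + N ^ 2) : M1.natAbs < c.natAbs := by
  have hgoal : (M1.natAbs : ℤ) < (c.natAbs : ℤ) := by
    rw [Int.natCast_natAbs, habs]
    have h1 : 1 ≤ |M1| := Int.one_le_abs hM1
    have h2 : |M1| ^ 2 = M1 ^ 2 := sq_abs M1
    have h3 : 1 ≤ N ^ 2 := int_one_le_sq hN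
    nlinarith [sq_nonneg (|M1| - 1), sq_nonneg (M1 ^ 2 - 1)]
  exact_mod_cast hgoal

set_option maxHeartbeats 3200000 in
/-- The core Fermat-style descent: `a^4 + b^2 = c^4` has no solutions with `a b ≠ 0`. -/
lemma pow4_add_sq_ne_pow4 : ∀ n : ℕ, ∀ c a b : ℤ, c.natAbs = n → a ≠ 0 → b ≠ 0 →
    a ^ 4 + b ^ 2 ≠ c ^ 4 := by
  intro n
  induction n using Nat.strong_induction_on with
  | _ n ih =>
  intro c a b hn ha hb heq
  have hc : c ≠ 0 := by
    intro h; rw [h] at heq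
    have h1 : (0:ℤ) < a ^ 4 := by positivity
    have h2 : (0:ℤ) < b ^ 2 := by positivity
    nlinarith
  -- reduce to coprime a c
  by_cases hg1 : Int.gcd a c = 1
  case neg =>
    set g : ℤ := (Int.gcd a c : ℤ) with hgdef
    have hgpos : 0 < g := Int.natCast_pos.mpr (Int.gcd_pos_of_ne_zero_left c ha)
    have hga : g ∣ a := Int.gcd_dvd_left a c
    have hgc : g ∣ c := Int.gcd_dvd_right a c
    have hgb2 : (g ^ 2) ^ 2 ∣ b ^ 2 := by
      have h1 : g ^ 4 ∣ a ^ 4 := pow_dvd_pow_of_dvd hga 4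
      have h2 : g ^ 4 ∣ c ^ 4 := pow_dvd_pow_of_dvd hgc 4
      have h3 : b ^ 2 = c ^ 4 - a ^ 4 := by linarith
      have h4 : g ^ 4 ∣ b ^ 2 := by rw [h3]; exact dvd_sub h2 h1
      rw [← pow_mul]; exact h4
    have hgb : g ^ 2 ∣ b := (Int.pow_dvd_pow_iff (two_ne_zero)).mp hgb2
    obtain ⟨a1, ha1⟩ := hga
    obtain ⟨c1, hc1⟩ := hgc
    obtain ⟨b1, hb1⟩ := hgb
    have heq1 : a1 ^ 4 + b1 ^ 2 = c1 ^ 4 := by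
      have hg4 : g ^ 4 ≠ 0 := by positivity
      have : g ^ 4 * (a1 ^ 4 + b1 ^ 2) = g ^ 4 * c1 ^ 4 := by
        rw [ha1, hb1, hc1] at heq; ring_nf at heq ⊢; linarith
      exact mul_left_cancel₀ hg4 this
    have ha1' : a1 ≠ 0 := by rintro rfl; simp at ha1; exact ha ha1
    have hb1' : b1 ≠ 0 := by rintro rfl; simp at hb1; exact hb hb1
    have hlt : c1.natAbs < n := by
      have hg2 : 2 ≤ g.natAbs := by
        have h1 : g.natAbs = Int.gcd a c := Int.natAbs_natCast _
        have h0 : g.natAbs ≠ 0 := by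
          intro h; rw [Int.natAbs_eq_zero] at h; rw [h] at hgpos; exact lt_irrefl _ hgpos
        omega
      have hc1ne : c1.natAbs ≠ 0 := by
        intro h0
        rw [Int.natAbs_eq_zero] at h0
        rw [h0, mul_zero] at hc1
        exact hc hc1
      have hmul : c.natAbs = g.natAbs * c1.natAbs := by rw [hc1, Int.natAbs_mul]
      have hstep : c1.natAbs < g.natAbs * c1.natAbs := by
        calc c1.natAbs < 2 * c1.natAbs := by omega
          _ ≤ g.natAbs * c1.natAbs := Nat.mul_le_mul_right _ hg2
      omega
    exact ih c1.natAbs hlt c1 a1 b1 rfl ha1' hb1' heq1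
  case pos =>
  have hco : IsCoprime a c := Int.isCoprime_iff_gcd_eq_one.mpr hg1
  rcases Int.even_or_odd a with haE | haO <;> rcases Int.even_or_odd c with hcE | hcO
  · -- both even : contradicts coprime
    obtain ⟨x, y, hxy⟩ := hco
    obtain ⟨k, hk⟩ := haE
    obtain ⟨l, hl⟩ := hcE
    have h2 : (2:ℤ) * (x * k + y * l) = 1 := by rw [hk, hl] at hxy; linear_combination hxy
    omega
  · -- a even, c odd : main case 2
    obtain ⟨k, hk⟩ := haE
    obtain ⟨l, hl⟩ := hcO
    have hk0 : k ≠ 0 := by rintro rfl; simp at hk; exact ha hk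
    obtain ⟨u, hu⟩ : ∃ u : ℤ, u = c ^ 2 - a ^ 2 := ⟨_, rfl⟩
    obtain ⟨v, hv⟩ : ∃ v : ℤ, v = c ^ 2 + a ^ 2 := ⟨_, rfl⟩
    have huv : u * v = b ^ 2 := by rw [hu, hv]; linear_combination (-1 : ℤ) * heq
    have huodd : Odd u := ⟨2*l^2 + 2*l - 2*k^2, by rw [hu, hk, hl]; ring⟩
    have hvodd : Odd v := ⟨2*l^2 + 2*l + 2*k^2, by rw [hv, hk, hl]; ring⟩
    have hvpos : 0 < v := by
      rw [hv]
      have h1 : (0:ℤ) < c ^ 2 := by positivity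
      have h2 : (0:ℤ) ≤ a ^ 2 := by positivity
      linarith
    have hupos : 0 < u := by
      by_contra hneg
      push_neg at hneg
      have hbpos : (0:ℤ) < b ^ 2 := by positivity
      nlinarith
    have hcuv : IsCoprime u v := by
      apply isCoprime_of_prime_dvd
      · rintro ⟨h0, -⟩; rw [h0] at hupos; exact lt_irrefl _ hupos
      · intro p hp hpu hpv
        have hps : p ∣ 2 * a ^ 2 := by
          have hd : v - u = 2 * a ^ 2 := by rw [hu, hv]; ring
          exact hd ▸ dvd_sub hpv hpu
        have hpc : p ∣ 2 * c ^ 2 := by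
          have hd : v + u = 2 * c ^ 2 := by rw [hu, hv]; ring
          exact hd ▸ dvd_add hpv hpu
        have hp2 : ¬ (p ∣ 2) := by
          intro hd2
          have hpn : p.natAbs.Prime := Int.prime_iff_natAbs_prime.mp hp
          have hn2 : p.natAbs ∣ 2 := by
            have := Int.natAbs_dvd_natAbs.mpr hd2
            simpa using this
          have hpe : p.natAbs = 2 := (Nat.prime_dvd_prime_iff_eq hpn Nat.prime_two).mp hn2
          have h2u : (2:ℤ) ∣ u := by
            have h1 : ((p.natAbs : ℤ)) ∣ u := Int.natAbs_dvd.mpr hpu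
            rwa [hpe] at h1
          rw [Int.odd_iff] at huodd
          omega
        have hpa : p ∣ a := by
          rcases hp.dvd_mul.mp hps with h | h
          · exact absurd h hp2
          · exact hp.dvd_of_dvd_pow h
        have hpc' : p ∣ c := by
          rcases hp.dvd_mul.mp hpc with h | h
          · exact absurd h hp2
          · exact hp.dvd_of_dvd_pow h
        obtain ⟨x, y, hxy⟩ := hco
        have : p ∣ 1 := hxy ▸ dvd_add (Dvd.dvd.mul_left hpa x) (Dvd.dvd.mul_left hpc' y)
        exact hp.not_isUnit (isUnit_of_dvd_one this)
    obtain ⟨s, hs⟩ := sq_of_coprime_nonneg hcuv huv (le_of_lt hupos)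
    obtain ⟨t, ht⟩ := sq_of_coprime_nonneg hcuv.symm
      (by rw [mul_comm]; exact huv) (le_of_lt hvpos)
    have hsodd : Odd s := by
      rw [hs] at huodd
      rcases Int.even_or_odd s with hse | hso
      · exfalso; obtain ⟨σ, hσ⟩ := hse; rw [Int.odd_iff] at huodd
        rw [hσ] at huodd
        have : (σ + σ) ^ 2 = 4 * σ ^ 2 := by ring
        rw [this] at huodd; omega
      · exact hso
    have htodd : Odd t := by
      rw [ht] at hvodd
      rcases Int.even_or_odd t with hte | hto
      · exfalso; obtain ⟨τ, hτ⟩ := hte; rw [Int.odd_iff] at hvodd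
        rw [hτ] at hvodd
        have : (τ + τ) ^ 2 = 4 * τ ^ 2 := by ring
        rw [this] at hvodd; omega
      · exact hto
    have hsum : t ^ 2 + s ^ 2 = 2 * c ^ 2 := by rw [← hs, ← ht, hu, hv]; ring
    have hdiff : t ^ 2 - s ^ 2 = 2 * a ^ 2 := by rw [← hs, ← ht, hu, hv]; ring
    obtain ⟨σ, hσ⟩ := hsodd
    obtain ⟨τ, hτ⟩ := htodd
    obtain ⟨e, he⟩ : ∃ e : ℤ, e = τ + σ + 1 := ⟨_, rfl⟩
    obtain ⟨f, hf⟩ : ∃ f : ℤ, f = τ - σ := ⟨_, rfl⟩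
    have hte : t = e + f := by rw [he, hf, hτ]; ring
    have hse : s = e - f := by rw [he, hf, hσ]; ring
    have hef_eq : e ^ 2 + f ^ 2 = c ^ 2 := by
      rw [hte, hse] at hsum
      have h2 : 2 * (e ^ 2 + f ^ 2) = 2 * c ^ 2 := by linear_combination hsum
      linarith
    have hef_mul : e * f = 2 * k ^ 2 := by
      rw [hte, hse] at hdiff
      rw [hk] at hdiff
      have h4 : 4 * (e * f) = 4 * (2 * k ^ 2) := by linear_combination hdiff
      linarith
    have hcost : IsCoprime s t := by
      have h1 : IsCoprime (s ^ 2) (t ^ 2) := by rw [← hs, ← ht]; exact hcuv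
      have h2 : IsCoprime s (t ^ 2) := h1.of_isCoprime_of_dvd_left (dvd_pow_self s two_ne_zero)
      exact h2.of_isCoprime_of_dvd_right (dvd_pow_self t two_ne_zero)
    have hcoef : IsCoprime e f := by
      obtain ⟨x, y, hxy⟩ := hcost
      rw [hse, hte] at hxy
      exact ⟨x + y, y - x, by linear_combination hxy⟩
    have hpt : PythagoreanTriple e f c := by
      show e * e + f * f = c * c
      linear_combination hef_eq
    obtain ⟨M, N, hmn, hc', hg', -⟩ :=
      PythagoreanTriple.coprime_classification.mp
        ⟨hpt, Int.isCoprime_iff_gcd_eq_one.mp hcoef⟩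
    have hMNk : M * N * (M ^ 2 - N ^ 2) = k ^ 2 := by
      have h2' : (2:ℤ) * (M * N * (M ^ 2 - N ^ 2)) = 2 * k ^ 2 := by
        rcases hmn with ⟨h1, h2⟩ | ⟨h1, h2⟩ <;> rw [h1, h2] at hef_mul <;>
          linear_combination hef_mul
      have := mul_left_cancel₀ (show (2:ℤ) ≠ 0 from two_ne_zero) h2'
      linarith [this]
    have hM0 : M ≠ 0 := by rintro rfl; simp at hMNk; exact hk0 (by nlinarith [sq_nonneg k])
    have hN0 : N ≠ 0 := by rintro rfl; simp at hMNk; exact hk0 (by nlinarith [sq_nonneg k])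
    have hD0 : M ^ 2 - N ^ 2 ≠ 0 := by
      intro h0; rw [h0, mul_zero] at hMNk; exact hk0 (by nlinarith [sq_nonneg k])
    have hcoMN : IsCoprime M N := Int.isCoprime_iff_gcd_eq_one.mpr hg'
    have hcoMD : IsCoprime M (M ^ 2 - N ^ 2) := by
      have h1 : IsCoprime M (-(N ^ 2) + M * M) :=
        ((hcoMN.pow_right).neg_right).add_mul_left_right M
      have h2 : M ^ 2 - N ^ 2 = -(N ^ 2) + M * M := by ring
      rwa [h2]
    have hcoND : IsCoprime N (M ^ 2 - N ^ 2) := by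
      have h1 : IsCoprime N (M ^ 2 + N * (-N)) :=
        ((hcoMN.symm.pow_right)).add_mul_left_right (-N)
      have h2 : M ^ 2 - N ^ 2 = M ^ 2 + N * (-N) := by ring
      rwa [h2]
    have hcoPD : IsCoprime (M * N) (M ^ 2 - N ^ 2) := hcoMD.mul_left hcoND
    obtain ⟨w, hw⟩ := Int.sq_of_isCoprime hcoPD.symm (by rw [mul_comm] at hMNk; exact hMNk)
    have hw0 : w ≠ 0 := by
      rintro rfl
      rcases hw with h | h <;> simp at h <;> exact hD0 h
    have pow_of_pm : ∀ X Y r : ℤ, IsCoprime X Y → X * Y = r ^ 2 → ∃ X1 : ℤ, X ^ 2 = X1 ^ 4 := by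
      intro X Y r hXY hr
      obtain ⟨X1, h | h⟩ := Int.sq_of_isCoprime hXY hr
      · exact ⟨X1, by rw [h]; ring⟩
      · exact ⟨X1, by rw [h]; ring⟩
    have hMN14 : ∃ M1 N1 : ℤ, M ^ 2 = M1 ^ 4 ∧ N ^ 2 = N1 ^ 4 := by
      obtain ⟨r, hr | hr⟩ := Int.sq_of_isCoprime hcoPD hMNk
      · obtain ⟨M1, hM1⟩ := pow_of_pm M N r hcoMN hr
        obtain ⟨N1, hN1⟩ := pow_of_pm N M r hcoMN.symm (by rw [mul_comm] at hr; exact hr)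
        exact ⟨M1, N1, hM1, hN1⟩
      · have hr' : M * (-N) = r ^ 2 := by linear_combination -hr
        obtain ⟨M1, hM1⟩ := pow_of_pm M (-N) r hcoMN.neg_right hr'
        obtain ⟨N1, hN1⟩ :=
          pow_of_pm (-N) M r hcoMN.neg_right.symm (by rw [mul_comm] at hr'; exact hr')
        refine ⟨M1, N1, hM1, ?_⟩
        have h2 : (-N) ^ 2 = N ^ 2 := by ring
        rw [← h2]; exact hN1
    obtain ⟨M1, N1, hM14, hN14⟩ := hMN14
    have hM10 : M1 ≠ 0 := by rintro rfl; simp at hM14; exact hM0 (by nlinarith [sq_nonneg M])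
    have hN10 : N1 ≠ 0 := by rintro rfl; simp at hN14; exact hN0 (by nlinarith [sq_nonneg N])
    have habs : (c.natAbs : ℤ) = M ^ 2 + N ^ 2 := by
      rcases hc' with h | h <;> rw [h]
      · rw [Int.natCast_natAbs, abs_of_nonneg (by positivity)]
      · rw [Int.natCast_natAbs, abs_neg, abs_of_nonneg (by positivity)]
    rcases hw with hwp | hwn
    · -- M² - N² = w² : N1⁴ + w² = M1⁴
      have hnew : N1 ^ 4 + w ^ 2 = M1 ^ 4 := by
        rw [← hM14, ← hN14]; linarith [hwp]
      have hlt : M1.natAbs < n := by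
        rw [← hn]; exact abs_lt_helper hM14 hM10 hN0 habs
      exact ih M1.natAbs hlt M1 N1 w rfl hN10 hw0 hnew
    · -- M² - N² = -w² : M1⁴ + w² = N1⁴
      have hnew : M1 ^ 4 + w ^ 2 = N1 ^ 4 := by
        rw [← hM14, ← hN14]; linarith [hwn]
      have hlt : N1.natAbs < n := by
        rw [← hn]
        exact abs_lt_helper hN14 hN10 hM0 (by rw [habs]; ring)
      exact ih N1.natAbs hlt N1 M1 w rfl hM10 hw0 hnew
  · -- a odd, c even : mod 4 contradiction
    obtain ⟨k, hk⟩ := haO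
    obtain ⟨l, hl⟩ := hcE
    rw [hk] at heq
    have hc2 : c = 2 * l := by omega
    rw [hc2] at heq
    have hz := congrArg (fun t : ℤ => (t : ZMod 4)) heq
    push_cast at hz
    have hdec : ∀ x y m : ZMod 4, ¬((2*x+1)^4 + y^2 = (2*m)^4) := by decide
    exact hdec _ _ _ hz
  · -- both odd : main case 1
    obtain ⟨k, hk⟩ := haO
    obtain ⟨l, hl⟩ := hcO
    obtain ⟨u, hu⟩ : ∃ u : ℤ, c ^ 2 - a ^ 2 = 2 * u :=
      ⟨2*l^2 + 2*l - 2*k^2 - 2*k, by rw [hk, hl]; ring⟩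
    obtain ⟨v, hv⟩ : ∃ v : ℤ, c ^ 2 + a ^ 2 = 2 * v :=
      ⟨2*l^2 + 2*l + 2*k^2 + 2*k + 1, by rw [hk, hl]; ring⟩
    have hva : v - u = a ^ 2 := by linarith
    have hvc : v + u = c ^ 2 := by linarith
    have hb4 : b ^ 2 = 4 * (u * v) := by
      linear_combination heq + (c ^ 2 + a ^ 2) * hu + (2 * u) * hv
    have hbe : Even b := by
      have h1 : Even (b ^ 2) := ⟨2 * (u * v), by linarith⟩
      exact (Int.even_pow.mp h1).1
    obtain ⟨b1, hb1⟩ := hbe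
    have hb1sq : b1 ^ 2 = u * v := by
      have h44 : (4:ℤ) * b1 ^ 2 = 4 * (u * v) := by rw [hb1] at hb4; linear_combination hb4
      linarith
    have hcuv : IsCoprime u v := by
      obtain ⟨x, y, hxy⟩ := (hco.pow : IsCoprime (a ^ 2) (c ^ 2))
      exact ⟨y - x, x + y, by linear_combination hxy + x * hva + y * hvc⟩
    have hvpos : 0 < v := by
      have h1 : (0:ℤ) < a ^ 2 := by positivity
      have h2 : (0:ℤ) ≤ c ^ 2 := by positivity
      linarith
    have hunn : 0 ≤ u := by
      by_contra hneg
      push_neg at hneg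
      have h1 : u * v < 0 := mul_neg_of_neg_of_pos hneg hvpos
      nlinarith [sq_nonneg b1]
    obtain ⟨t, ht⟩ := sq_of_coprime_nonneg hcuv.symm
      (by rw [mul_comm]; exact hb1sq.symm) (le_of_lt hvpos)
    obtain ⟨s, hs⟩ := sq_of_coprime_nonneg hcuv hb1sq.symm hunn
    subst hs; subst ht
    have hs0 : s ≠ 0 := by
      rintro rfl
      have h1 : a ^ 2 = c ^ 2 := by linarith
      have h2 : b ^ 2 = 0 := by nlinarith
      exact hb (by nlinarith [sq_nonneg b])
    have hnew : s ^ 4 + (a * c) ^ 2 = t ^ 4 := by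
      linear_combination (-(a^2)) * hvc - (t^2 + s^2) * hva
    have hlt : t.natAbs < n := by
      rw [← hn]
      apply natAbs_lt_of_sq_lt_sq
      have h1 : (0:ℤ) < s ^ 2 := by positivity
      linarith
    exact ih t.natAbs hlt t s (a * c) rfl hs0 (mul_ne_zero ha hc) hnew


lemma not_both_even {a b : ℤ} (hco : IsCoprime a b) (ha : Even a) (hb : Even b) : False := by
  obtain ⟨x, y, hxy⟩ := hco
  obtain ⟨k, hk⟩ := ha
  obtain ⟨l, hl⟩ := hb
  have h2 : (2:ℤ) * (x * k + y * l) = 1 := by rw [hk, hl] at hxy; linear_combination hxy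
  omega

lemma odd_of_odd_sq {s : ℤ} (h : Odd (s ^ 2)) : Odd s := by
  rcases Int.even_or_odd s with he | ho
  · exfalso
    obtain ⟨k, hk⟩ := he
    rw [Int.odd_iff] at h
    rw [hk] at h
    have h4 : (k + k) ^ 2 = 4 * k ^ 2 := by ring
    rw [h4] at h
    omega
  · exact ho

lemma int_odd_ne_zero {s : ℤ} (h : Odd s) : s ≠ 0 := by
  rintro rfl
  rw [Int.odd_iff] at h
  omega

/-- If `U*V = a*b` and `U² + V² = a² - b²` with `a`, `b` coprime and nonzero, contradiction. -/
lemma aux_L (a b U V : ℤ) (hco : IsCoprime a b) (ha : a ≠ 0) (hb : b ≠ 0)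
    (hUV : U * V = a * b) (hsum : U ^ 2 + V ^ 2 = a ^ 2 - b ^ 2) : False := by
  have hU : U ≠ 0 := by
    rintro rfl; rw [zero_mul] at hUV; exact mul_ne_zero ha hb hUV.symm
  have hV : V ≠ 0 := by
    rintro rfl; rw [mul_zero] at hUV; exact mul_ne_zero ha hb hUV.symm
  set A : ℤ := (Int.gcd a U : ℤ) with hAdef
  have hA0 : A ≠ 0 := by
    simp only [hAdef, ne_eq, Int.natCast_eq_zero]
    intro h0
    exact ha (Int.natAbs_eq_zero.mp (Nat.eq_zero_of_gcd_eq_zero_left h0) : a = 0)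
  obtain ⟨β, hβ⟩ : A ∣ a := Int.gcd_dvd_left a U
  obtain ⟨γ, hγ⟩ : A ∣ U := Int.gcd_dvd_right a U
  have hβγ : IsCoprime β γ := by
    have hpos : 0 < Int.gcd a U := Int.gcd_pos_of_ne_zero_left U ha
    have h1 : Int.gcd (a / A) (U / A) = 1 := Int.gcd_div_gcd_div_gcd hpos
    have h2 : a / A = β := by rw [hβ]; exact Int.mul_ediv_cancel_left β hA0
    have h3 : U / A = γ := by rw [hγ]; exact Int.mul_ediv_cancel_left γ hA0
    rw [h2, h3] at h1
    exact Int.isCoprime_iff_gcd_eq_one.mpr h1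
  have hγ0 : γ ≠ 0 := by rintro rfl; rw [mul_zero] at hγ; exact hU hγ
  have hβ0 : β ≠ 0 := by rintro rfl; rw [mul_zero] at hβ; exact ha hβ
  have hkey0 : γ * V = β * b := by
    have h1 : A * (γ * V) = A * (β * b) := by
      rw [hβ, hγ] at hUV; linear_combination hUV
    exact mul_left_cancel₀ hA0 h1
  obtain ⟨δ, hδ⟩ : γ ∣ b := by
    have h1 : γ ∣ β * b := ⟨V, by linear_combination -hkey0⟩
    exact (hβγ.symm).dvd_of_dvd_mul_left h1
  have hδ0 : δ ≠ 0 := by rintro rfl; rw [mul_zero] at hδ; exact hb hδ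
  have hVβδ : V = β * δ := by
    have h1 : γ * V = γ * (β * δ) := by rw [hδ] at hkey0; linear_combination hkey0
    exact mul_left_cancel₀ hγ0 h1
  have hcoAδ : IsCoprime A δ :=
    (hco.of_isCoprime_of_dvd_left ⟨β, hβ⟩).of_isCoprime_of_dvd_right ⟨γ, by rw [hδ]; ring⟩
  have hkey : A ^ 2 * (β ^ 2 - γ ^ 2) = δ ^ 2 * (β ^ 2 + γ ^ 2) := by
    rw [hβ, hγ, hδ, hVβδ] at hsum
    linear_combination -hsum
  have hdvd : A ^ 2 ∣ β ^ 2 + γ ^ 2 := by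
    have h1 : A ^ 2 ∣ δ ^ 2 * (β ^ 2 + γ ^ 2) := ⟨β ^ 2 - γ ^ 2, by linear_combination -hkey⟩
    exact (hcoAδ.pow).dvd_of_dvd_mul_left h1
  obtain ⟨K, hK⟩ := hdvd
  have hKδ : β ^ 2 - γ ^ 2 = K * δ ^ 2 := by
    have h1 : A ^ 2 * (β ^ 2 - γ ^ 2) = A ^ 2 * (K * δ ^ 2) := by
      rw [hK] at hkey; linear_combination hkey
    exact mul_left_cancel₀ (pow_ne_zero 2 hA0) h1
  have hK0 : K ≠ 0 := by
    rintro rfl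
    rw [mul_zero] at hK
    have h1 : (0:ℤ) < β ^ 2 + γ ^ 2 := by positivity
    rw [hK] at h1; exact lt_irrefl _ h1
  have hfin : γ ^ 4 + (K * A * δ) ^ 2 = β ^ 4 := by
    linear_combination (-(β ^ 2 - γ ^ 2)) * hK + (-(A ^ 2 * K)) * hKδ
  exact pow4_add_sq_ne_pow4 β.natAbs β γ (K * A * δ) rfl hγ0
    (mul_ne_zero (mul_ne_zero hK0 hA0) hδ0) hfin

lemma aux_M (a b s t : ℤ) (hco : IsCoprime a b) (ha : a ≠ 0) (hb : b ≠ 0)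
    (hs : a ^ 2 - 2 * a * b - b ^ 2 = s ^ 2) (ht : a ^ 2 + 2 * a * b - b ^ 2 = t ^ 2)
    (hsodd : Odd s) (htodd : Odd t) : False := by
  obtain ⟨σ, hσ⟩ := hsodd
  obtain ⟨τ, hτ⟩ := htodd
  obtain ⟨U, hUdef⟩ : ∃ U : ℤ, U = τ + σ + 1 := ⟨_, rfl⟩
  obtain ⟨V, hVdef⟩ : ∃ V : ℤ, V = τ - σ := ⟨_, rfl⟩
  have ht2 : t = U + V := by rw [hUdef, hVdef, hτ]; ring
  have hs2 : s = U - V := by rw [hUdef, hVdef, hσ]; ring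
  have hts : t ^ 2 - s ^ 2 = 4 * (a * b) := by linear_combination hs - ht
  have hUV : U * V = a * b := by
    rw [ht2, hs2] at hts
    have h4 : 4 * (U * V) = 4 * (a * b) := by linear_combination hts
    linarith
  have hsum2 : t ^ 2 + s ^ 2 = 2 * (a ^ 2 - b ^ 2) := by linear_combination -ht - hs
  have hsum : U ^ 2 + V ^ 2 = a ^ 2 - b ^ 2 := by
    rw [ht2, hs2] at hsum2
    have h2 : 2 * (U ^ 2 + V ^ 2) = 2 * (a ^ 2 - b ^ 2) := by linear_combination hsum2
    linarith
  exact aux_L a b U V hco ha hb hUV hsum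

set_option maxHeartbeats 1600000 in
lemma quartic_lemma (a b c : ℤ) (hco : IsCoprime a b) (hb : b ≠ 0)
    (h : a ^ 4 - 6 * a ^ 2 * b ^ 2 + b ^ 4 = c ^ 2) : a = 0 := by
  by_contra ha
  have hAB : (a ^ 2 - 2 * a * b - b ^ 2) * (a ^ 2 + 2 * a * b - b ^ 2) = c ^ 2 := by
    linear_combination h
  have hAodd : Odd (a ^ 2 - 2 * a * b - b ^ 2) := by
    rcases Int.even_or_odd a with ⟨k, hk⟩ | ⟨k, hk⟩ <;>
      rcases Int.even_or_odd b with ⟨l, hl⟩ | ⟨l, hl⟩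
    · exact (not_both_even hco ⟨k, hk⟩ ⟨l, hl⟩).elim
    · exact ⟨2*k^2 - 4*k*l - 2*k - 2*l^2 - 2*l - 1, by rw [hk, hl]; ring⟩
    · exact ⟨2*k^2 + 2*k - 4*k*l - 2*l - 2*l^2, by rw [hk, hl]; ring⟩
    · exfalso
      rw [hk, hl] at h
      have hz := congrArg (fun r : ℤ => (r : ZMod 16)) h
      push_cast at hz
      have hdec : ∀ x y z : ZMod 16,
          ¬((2*x+1)^4 - 6*(2*x+1)^2*(2*y+1)^2 + (2*y+1)^4 = z^2) := by decide
      exact hdec _ _ _ hz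
  have hBodd : Odd (a ^ 2 + 2 * a * b - b ^ 2) := by
    obtain ⟨m, hm⟩ := hAodd
    exact ⟨m + 2 * (a * b), by linarith [hm]⟩
  have hA0 : a ^ 2 - 2 * a * b - b ^ 2 ≠ 0 := int_odd_ne_zero hAodd
  have hB0 : a ^ 2 + 2 * a * b - b ^ 2 ≠ 0 := int_odd_ne_zero hBodd
  have hcoAB : IsCoprime (a ^ 2 - 2 * a * b - b ^ 2) (a ^ 2 + 2 * a * b - b ^ 2) := by
    apply isCoprime_of_prime_dvd
    · rintro ⟨h1, -⟩; exact hA0 h1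
    · intro p hp hpA hpB
      have hp2 : ¬ (p ∣ 2) := by
        intro hd2
        have hpn : p.natAbs.Prime := Int.prime_iff_natAbs_prime.mp hp
        have hn2 : p.natAbs ∣ 2 := by
          have := Int.natAbs_dvd_natAbs.mpr hd2
          simpa using this
        have hpe : p.natAbs = 2 := (Nat.prime_dvd_prime_iff_eq hpn Nat.prime_two).mp hn2
        have h2u : (2:ℤ) ∣ a ^ 2 - 2 * a * b - b ^ 2 := by
          have h1 : ((p.natAbs : ℤ)) ∣ a ^ 2 - 2 * a * b - b ^ 2 := Int.natAbs_dvd.mpr hpA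
          rwa [hpe] at h1
        rw [Int.odd_iff] at hAodd
        omega
      have hd1 : p ∣ 4 * (a * b) := by
        have he : a ^ 2 + 2 * a * b - b ^ 2 - (a ^ 2 - 2 * a * b - b ^ 2) = 4 * (a * b) := by
          ring
        exact he ▸ dvd_sub hpB hpA
      have hd2 : p ∣ 2 * (a ^ 2 - b ^ 2) := by
        have he : a ^ 2 - 2 * a * b - b ^ 2 + (a ^ 2 + 2 * a * b - b ^ 2) =
            2 * (a ^ 2 - b ^ 2) := by ring
        exact he ▸ dvd_add hpA hpB
      have hpab : p ∣ a * b := by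
        rcases hp.dvd_mul.mp hd1 with h1 | h1
        · exfalso
          have h44 : (4:ℤ) = 2 * 2 := by norm_num
          rw [h44] at h1
          rcases hp.dvd_mul.mp h1 with h2 | h2
          · exact hp2 h2
          · exact hp2 h2
        · exact h1
      have hpd : p ∣ a ^ 2 - b ^ 2 := by
        rcases hp.dvd_mul.mp hd2 with h1 | h1
        · exact absurd h1 hp2
        · exact h1
      have hget : p ∣ a ∧ p ∣ b := by
        rcases hp.dvd_mul.mp hpab with h1 | h1
        · refine ⟨h1, ?_⟩
          have h2 : p ∣ a ^ 2 := dvd_pow h1 two_ne_zero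
          have h3 : p ∣ b ^ 2 := by
            have he : a ^ 2 - (a ^ 2 - b ^ 2) = b ^ 2 := by ring
            exact he ▸ dvd_sub h2 hpd
          exact hp.dvd_of_dvd_pow h3
        · refine ⟨?_, h1⟩
          have h2 : p ∣ b ^ 2 := dvd_pow h1 two_ne_zero
          have h3 : p ∣ a ^ 2 := by
            have he : a ^ 2 - b ^ 2 + b ^ 2 = a ^ 2 := by ring
            exact he ▸ dvd_add hpd h2
          exact hp.dvd_of_dvd_pow h3
      obtain ⟨x, y, hxy⟩ := hco
      exact hp.not_isUnit (isUnit_of_dvd_one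
        (hxy ▸ dvd_add (hget.1.mul_left x) (hget.2.mul_left y)))
  obtain ⟨s, hsA⟩ := Int.sq_of_isCoprime hcoAB hAB
  obtain ⟨t, htB⟩ := Int.sq_of_isCoprime hcoAB.symm (by rw [mul_comm] at hAB; exact hAB)
  rcases hsA with hsA | hsA <;> rcases htB with htB | htB
  · have hsodd : Odd s := odd_of_odd_sq (by rw [← hsA]; exact hAodd)
    have htodd : Odd t := odd_of_odd_sq (by rw [← htB]; exact hBodd)
    exact aux_M a b s t hco ha hb (by linear_combination hsA) (by linear_combination htB)
      hsodd htodd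
  · have hs0 : s ≠ 0 := by rintro rfl; simp at hsA; exact hA0 hsA
    have ht0 : t ≠ 0 := by rintro rfl; simp at htB; exact hB0 htB
    rw [hsA, htB] at hAB
    nlinarith [sq_nonneg c, int_one_le_sq hs0, int_one_le_sq ht0]
  · have hs0 : s ≠ 0 := by rintro rfl; simp at hsA; exact hA0 hsA
    have ht0 : t ≠ 0 := by rintro rfl; simp at htB; exact hB0 htB
    rw [hsA, htB] at hAB
    nlinarith [sq_nonneg c, int_one_le_sq hs0, int_one_le_sq ht0]
  · have htodd : Odd t := by
      apply odd_of_odd_sq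
      obtain ⟨m, hm⟩ := hBodd
      exact ⟨-m - 1, by linarith [hm]⟩
    have hsodd : Odd s := by
      apply odd_of_odd_sq
      obtain ⟨m, hm⟩ := hAodd
      exact ⟨-m - 1, by linarith [hm]⟩
    exact aux_M b a t s hco.symm hb ha (by linear_combination -htB)
      (by linear_combination -hsA) htodd hsodd


theorem E1_rational_points (x y : ℚ) :
    y ^ 2 = x ^ 3 + 3 * x ^ 2 - 8 * x - 24 → x = -3 ∧ y = 0 := by
  intro h
  obtain ⟨X, hXdef⟩ : ∃ X : ℚ, X = x + 3 := ⟨_, rfl⟩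
  have hX : y ^ 2 = X ^ 3 - 6 * X ^ 2 + X := by rw [hXdef]; linear_combination h
  have hmain : X = 0 := by
    obtain ⟨u, hudef⟩ : ∃ u : ℤ, u = X.num := ⟨_, rfl⟩
    obtain ⟨w, hwdef⟩ : ∃ w : ℤ, w = (X.den : ℤ) := ⟨_, rfl⟩
    have hwpos : 0 < w := by rw [hwdef]; exact_mod_cast X.pos
    have hcu : IsCoprime u w := by
      rw [Int.isCoprime_iff_gcd_eq_one, hudef, hwdef]
      exact X.reduced
    have hw0 : (w : ℚ) ≠ 0 := by
      intro h0
      rw [show ((w:ℤ):ℚ) = ((w:ℤ):ℚ) from rfl] at h0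
      have : w = 0 := by exact_mod_cast h0
      omega
    have hXq : X = (u : ℚ) / (w : ℚ) := by rw [hudef, hwdef]; exact_mod_cast (Rat.num_div_den X).symm
    -- z = y * w^2 is an integer whose square is u*w*(u^2-6uw+w^2)
    obtain ⟨z, hzdef⟩ : ∃ z : ℚ, z = y * (w : ℚ) ^ 2 := ⟨_, rfl⟩
    have hz2 : z ^ 2 = ((u * w * (u ^ 2 - 6 * u * w + w ^ 2) : ℤ) : ℚ) := by
      rw [hzdef]
      push_cast
      rw [mul_pow, hX, hXq]
      field_simp
    have hzden : z.den = 1 := by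
      have h1 : (z ^ 2).den = 1 := by rw [hz2]; exact Rat.den_intCast _
      have h2 : (z ^ 2).den = z.den ^ 2 := Rat.den_pow z 2
      have := h1 ▸ h2
      nlinarith [z.pos]
    have hzint : z = (z.num : ℚ) := by
      conv_lhs => rw [← Rat.num_div_den z]
      rw [hzden]
      simp
    obtain ⟨d, hddef⟩ : ∃ d : ℤ, d = z.num := ⟨_, rfl⟩
    have hd : d ^ 2 = u * w * (u ^ 2 - 6 * u * w + w ^ 2) := by
      have h1 : ((d : ℚ)) ^ 2 = ((u * w * (u ^ 2 - 6 * u * w + w ^ 2) : ℤ) : ℚ) := by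
        rw [hddef, ← hzint]; exact hz2
      exact_mod_cast h1
    -- coprimality of u*w and the quartic factor
    have hcoQ : IsCoprime (u * w) (u ^ 2 - 6 * u * w + w ^ 2) := by
      have h1 : IsCoprime u (u ^ 2 - 6 * u * w + w ^ 2) := by
        have ha : IsCoprime u (w ^ 2 + u * (u - 6 * w)) :=
          (hcu.pow_right).add_mul_left_right (u - 6 * w)
        have hb : u ^ 2 - 6 * u * w + w ^ 2 = w ^ 2 + u * (u - 6 * w) := by ring
        rwa [hb]
      have h2 : IsCoprime w (u ^ 2 - 6 * u * w + w ^ 2) := by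
        have ha : IsCoprime w (u ^ 2 + w * (w - 6 * u)) :=
          (hcu.symm.pow_right).add_mul_left_right (w - 6 * u)
        have hb : u ^ 2 - 6 * u * w + w ^ 2 = u ^ 2 + w * (w - 6 * u) := by ring
        rwa [hb]
      exact h1.mul_left h2
    -- extract squares
    have hsplit : ∃ a bb : ℤ, (u = a ^ 2 ∨ u = -a ^ 2) ∧ w = bb ^ 2 := by
      obtain ⟨r, hr | hr⟩ := Int.sq_of_isCoprime hcoQ hd.symm
      · obtain ⟨a, hA⟩ := Int.sq_of_isCoprime hcu hr
        obtain ⟨bb, hB | hB⟩ := Int.sq_of_isCoprime hcu.symm (by rw [mul_comm] at hr; exact hr)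
        · exact ⟨a, bb, hA, hB⟩
        · exfalso
          nlinarith [hwpos, hB, sq_nonneg bb]
      · have hr' : u * (-w) = r ^ 2 := by linear_combination -hr
        obtain ⟨a, hA⟩ := Int.sq_of_isCoprime hcu.neg_right hr'
        obtain ⟨bb, hB | hB⟩ :=
          Int.sq_of_isCoprime hcu.neg_right.symm (by rw [mul_comm] at hr'; exact hr')
        · exfalso; nlinarith [hwpos, hB]
        · exact ⟨a, bb, hA, by linarith [hB]⟩
    obtain ⟨a, bb, hupm, hwb⟩ := hsplit
    have hbb0 : bb ≠ 0 := by rintro rfl; simp at hwb; omega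
    -- goal: X = 0, i.e. u = 0
    have hu0 : u = 0 := by
      rcases hupm with hue | hue
      · -- u = a^2 : use the quartic lemma
        by_cases ha0 : a = 0
        · rw [hue, ha0]; ring
        · exfalso
          have hcab : IsCoprime a bb := by
            have h1 : IsCoprime (a ^ 2) (bb ^ 2) := by rw [← hue, ← hwb]; exact hcu
            have h2 : IsCoprime a (bb ^ 2) :=
              h1.of_isCoprime_of_dvd_left (dvd_pow_self a two_ne_zero)
            exact h2.of_isCoprime_of_dvd_right (dvd_pow_self bb two_ne_zero)
          have hQsq : ∃ cq : ℤ, a ^ 4 - 6 * a ^ 2 * bb ^ 2 + bb ^ 4 = cq ^ 2 := by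
            obtain ⟨q, hq | hq⟩ := Int.sq_of_isCoprime hcoQ.symm
              (by rw [mul_comm] at hd; exact hd.symm)
            · exact ⟨q, by rw [← hq, hue, hwb]; ring⟩
            · -- Q = -q^2 : sign forces q = 0
              have hq0 : q = 0 := by
                have hP : (0:ℤ) < u * w := by
                  rw [hue, hwb]
                  positivity
                by_contra hq0
                have h1 : (0:ℤ) < q ^ 2 := by positivity
                nlinarith [hd, sq_nonneg d]
              refine ⟨0, ?_⟩
              rw [hq0] at hq
              rw [hue, hwb] at hq
              linear_combination hq
          obtain ⟨cq, hcq⟩ := hQsq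
          exact ha0 (quartic_lemma a bb cq hcab hbb0 hcq)
      · -- u = -a^2 : sign contradiction unless a = 0
        by_cases ha0 : a = 0
        · rw [hue, ha0]; ring
        · exfalso
          have hP : (0:ℤ) < a ^ 2 * bb ^ 2 * (a ^ 4 + 6 * a ^ 2 * bb ^ 2 + bb ^ 4) := by
            positivity
          have hdneg : d ^ 2 = -(a ^ 2 * bb ^ 2 * (a ^ 4 + 6 * a ^ 2 * bb ^ 2 + bb ^ 4)) := by
            rw [hue, hwb] at hd
            linear_combination hd
          nlinarith [sq_nonneg d]
    rw [← Rat.num_eq_zero, ← hudef]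
    exact hu0
  constructor
  · have hx : x = X - 3 := by rw [hXdef]; ring
    rw [hx, hmain]; norm_num
  · have h0 : y ^ 2 = 0 := by rw [hX, hmain]; ring
    exact pow_eq_zero_iff two_ne_zero |>.mp h0
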